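/- Let q be a prime power, α a generator of the multiplicative group of F_{q^n}, B a basis of F_{q^n} over F_q, v ∈ F_q^n a nonzero vector, and I = {i_1,...,i_n} distinct integers. Suppose the minimal polynomial of α does not divide ∑_{j=1}^n c_j x^{i_j} for any nonzero (c_1,...,c_n) ∈ F_q^n. Then the map Ψ : F_{q^n} → F_q^n sending 0 to 0 and α^t to (v^T f_B(α^{i_1 + t}), ..., v^T f_B(α^{i_n + t})) is an isomorphism of additive groups. -/

import Mathlib

/-- Let `L/K` be an extension of finite fields of degree `n`, `α` a generator of `Lˣ`,
`B` a `K`-basis of `L`, `v ≠ 0`, and `I = {i_1, …, i_n}` distinct exponents. If the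
minimal polynomial of `α` divides no nonzero combination `∑ c_j x^{i_j}`, then the map
`Ψ` sending `0` to `0` and `α^t` to `(vᵀ f_B(α^{i_1+t}), …, vᵀ f_B(α^{i_n+t}))` is an
isomorphism of additive groups from `L` to `Kⁿ`. -/
theorem stmt_7 (K L : Type*) [Field K] [Field L] [Algebra K L]
    [Fintype K] [Fintype L]
    (n : ℕ) (hn : 1 ≤ n) (B : Module.Basis (Fin n) K L)
    (α : Lˣ) (hα : ∀ u : Lˣ, u ∈ Subgroup.zpowers α)
    (v : Fin n → K) (hv : v ≠ 0)
    (i : Fin n → ℕ) (hi : Function.Injective i)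
    (hmin : ∀ c : Fin n → K, c ≠ 0 →
      ¬ (minpoly K (α : L) ∣ ∑ j, Polynomial.C (c j) * Polynomial.X ^ (i j)))
    (Ψ : L → (Fin n → K))
    (hΨ0 : Ψ 0 = 0)
    (hΨpow : ∀ t : ℕ, Ψ ((α : L) ^ t) =
      fun j => ∑ k, v k * B.repr ((α : L) ^ (i j + t)) k) :
    Function.Bijective Ψ ∧ ∀ x y : L, Ψ (x + y) = Ψ x + Ψ y := by
  haveI : FiniteDimensional K L := Module.Finite.of_basis B
  -- the linear functional y ↦ ∑ k, v k * B.repr y k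
  set φ : L →ₗ[K] K := ∑ k, v k • B.coord k with hφ
  have hφ_apply : ∀ y : L, φ y = ∑ k, v k * B.repr y k := by
    intro y
    simp [hφ, LinearMap.sum_apply, Module.Basis.coord_apply, smul_eq_mul]
  -- the linear map T
  set T : L →ₗ[K] (Fin n → K) :=
    LinearMap.pi (fun j => φ.comp (LinearMap.mulLeft K ((α : L) ^ (i j)))) with hT
  have hT_apply : ∀ (x : L) (j : Fin n), T x j = φ ((α : L) ^ (i j) * x) := by
    intro x j; rfl
  -- Ψ = T
  have hΨT : Ψ = T := by
    funext x
    by_cases hx : x = 0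
    · simp [hx, hΨ0]
    · obtain ⟨t, ht⟩ := (mem_powers_iff_mem_zpowers).2 (hα (Units.mk0 x hx))
      have hxt : (α : L) ^ t = x := by
        have := congrArg (Units.val) ht
        simpa using this
      rw [← hxt, hΨpow t]
      funext j
      rw [hT_apply, ← pow_add, hφ_apply]
  have hadd : ∀ x y : L, Ψ (x + y) = Ψ x + Ψ y := by
    intro x y; rw [hΨT]; exact T.map_add x y
  -- injectivity of T
  have hker : ∀ x : L, T x = 0 → x = 0 := by
    intro x hx
    by_contra hx0
    -- the family α^{i j} * x is linearly independent
    have hli : LinearIndependent K (fun j : Fin n => (α : L) ^ (i j) * x) := by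
      rw [Fintype.linearIndependent_iff]
      intro c hc
      by_contra hc0
      have hc0' : c ≠ 0 := by
        intro h; apply hc0; intro j; rw [h]; rfl
      have hsum : (∑ j, c j • (α : L) ^ (i j)) * x = 0 := by
        rw [Finset.sum_mul]
        simpa [smul_mul_assoc] using hc
      have hsum0 : (∑ j, c j • (α : L) ^ (i j)) = 0 :=
        (mul_eq_zero.1 hsum).resolve_right hx0
      have haev : Polynomial.aeval (α : L)
          (∑ j, Polynomial.C (c j) * Polynomial.X ^ (i j)) = 0 := by
        rw [map_sum]
        simpa [Polynomial.aeval_C, Algebra.smul_def] using hsum0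
      exact hmin c hc0' (minpoly.dvd K (α : L) haev)
    have hcard : Fintype.card (Fin n) = Module.finrank K L := by
      simp [Module.finrank_eq_card_basis B]
    haveI : Nonempty (Fin n) := Fin.pos_iff_nonempty.1 hn
    let C := basisOfLinearIndependentOfCardEqFinrank hli hcard
    have hC : ∀ j, C j = (α : L) ^ (i j) * x := fun j =>
      congrFun (coe_basisOfLinearIndependentOfCardEqFinrank hli hcard) j
    have hφ0 : φ = 0 := by
      apply C.ext
      intro j
      rw [hC j, ← hT_apply]
      rw [hx]
      rfl
    obtain ⟨k, hk⟩ := Function.ne_iff.1 hv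
    apply hk
    have := congrArg (fun f : L →ₗ[K] K => f (B k)) hφ0
    simp only [LinearMap.zero_apply] at this
    rw [hφ_apply] at this
    simpa [Finsupp.single_apply, Finset.sum_ite_eq'] using this
  have hinj : Function.Injective T := by
    rw [← LinearMap.ker_eq_bot]
    exact LinearMap.ker_eq_bot'.2 (fun x hx => hker x hx)
  have hsurj : Function.Surjective T := by
    have hdim : Module.finrank K L = Module.finrank K (Fin n → K) := by
      simp [Module.finrank_eq_card_basis B]
    exact (LinearMap.injective_iff_surjective_of_finrank_eq_finrank hdim).1 hinj
  exact ⟨by rw [hΨT]; exact ⟨hinj, hsurj⟩, hadd⟩
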